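/- The covered-subterm relation û⊴ is stable by valuation: if u ▷̂ v (u is a strict covered-superterm of v, i.e., v û⊴ u) and σ is an IDTS-valuation, then uσ ▷̂ vσ. -/

import Mathlib

set_option linter.unusedVariables false

/-- IDTS metaterms: variables, abstraction, function symbols (fixed arity via list),
and metavariables applied to arguments. -/
inductive Tm : Type where
  | var  : ℕ → Tm
  | lam  : ℕ → Tm → Tm
  | fn   : ℕ → List Tm → Tm
  | mvar : ℕ → List Tm → Tm

namespace Tm

/-- Free variables. -/
def fv : Tm → Set ℕ
  | var x => {x}
  | lam x u => fv u \ {x}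
  | fn _ us => us.attach.foldr (fun ⟨u, hu⟩ s => fv u ∪ s) ∅
  | mvar _ us => us.attach.foldr (fun ⟨u, hu⟩ s => fv u ∪ s) ∅
decreasing_by
  all_goals try have := List.sizeOf_lt_of_mem hu
  all_goals simp
  all_goals omega

/-- Substitution of terms for free variables (the paper works modulo α-conversion,
assuming bound variables distinct from free variables of the codomain). -/
def subst (θ : ℕ → Tm) : Tm → Tm
  | var x => θ x
  | lam x u => lam x (subst (Function.update θ x (var x)) u)
  | fn f us => fn f (us.attach.map fun ⟨u, hu⟩ => subst θ u)
  | mvar Z us => mvar Z (us.attach.map fun ⟨u, hu⟩ => subst θ u)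
decreasing_by
  all_goals try have := List.sizeOf_lt_of_mem hu
  all_goals simp
  all_goals omega

end Tm
namespace Tm

/-- An `n`-ary substitute `λ̲(x⃗).w` is coded as the pair `(x⃗, w)`;
an IDTS-valuation assigns a substitute to every metavariable. -/
def Val : Type := ℕ → List ℕ × Tm

/-- The substitution `{x⃗ → t⃗}` built from parallel lists. -/
def listSubst (xs : List ℕ) (ts : List Tm) (y : ℕ) : Tm :=
  if y ∈ xs then ts.getD (xs.idxOf y) (var y) else var y

/-- Application of an IDTS-valuation to a metaterm:
`Z(u⃗)σ = w{x⃗ → u⃗σ}` when `σ(Z) = λ̲(x⃗).w`. -/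
def vapp (σ : Val) : Tm → Tm
  | var x => var x
  | lam x u => lam x (vapp σ u)
  | fn f us => fn f (us.attach.map fun ⟨u, hu⟩ => vapp σ u)
  | mvar Z us => ((σ Z).2).subst (listSubst (σ Z).1 (us.attach.map fun ⟨u, hu⟩ => vapp σ u))
decreasing_by
  all_goals try have := List.sizeOf_lt_of_mem hu
  all_goals simp
  all_goals omega

/-- `FnReach t s`: `s` is a subterm of `t` reachable by passing only through
function-symbol nodes. -/
inductive FnReach : Tm → Tm → Prop
  | refl (t : Tm) : FnReach t t
  | step {f : ℕ} {us : List Tm} {t s : Tm} :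
      t ∈ us → FnReach t s → FnReach (fn f us) s

/-- `Covered u v` (i.e. `v û⊴ u`): `v` is a covered-subterm of `u`; it is obtained by
replacing, under a context made only of abstractions, a subterm of `u` by one of its
subterms reachable through function-symbol nodes only. -/
inductive Covered : Tm → Tm → Prop
  | base {t s : Tm} : FnReach t s → Covered t s
  | abs {x : ℕ} {t s : Tm} : Covered t s → Covered (lam x t) (lam x s)

/-- `u ▷̂ v`: `v` is a *strict* covered-subterm of `u`. -/
def StrictCovered (u v : Tm) : Prop := Covered u v ∧ u ≠ v

/-- Context closure of a root-step relation: the rewrite relation. -/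
inductive Rw (root : Tm → Tm → Prop) : Tm → Tm → Prop
  | root {u v} : root u v → Rw root u v
  | abs {x u v} : Rw root u v → Rw root (lam x u) (lam x v)
  | fnArg {f l₁ l₂ u v} : Rw root u v →
      Rw root (fn f (l₁ ++ u :: l₂)) (fn f (l₁ ++ v :: l₂))
  | mvarArg {Z l₁ l₂ u v} : Rw root u v →
      Rw root (mvar Z (l₁ ++ u :: l₂)) (mvar Z (l₁ ++ v :: l₂))

/-- Binary application via the application symbol `a`. -/
def appT (a : ℕ) (u v : Tm) : Tm := fn a [u, v]

/-- Iterated application `@(h, u₁, …, uₙ)`. -/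
def appSpine (a : ℕ) (h : Tm) (us : List Tm) : Tm := us.foldl (appT a) h

/-- Accessible subterms of `v` (Definition "Accessible subterms"), relative to a set `C`
of constructors, an application symbol `a` and a predicate `basic` singling out the
terms of basic type. -/
inductive IAcc (C : ℕ → Prop) (a : ℕ) (basic : Tm → Prop) (v : Tm) : Tm → Prop
  | refl : IAcc C a basic v v
  | abs {x u} : IAcc C a basic v (lam x u) → IAcc C a basic v u
  | constr {c us u} : C c → IAcc C a basic v (fn c us) → u ∈ us → IAcc C a basic v u
  | basicArg {f us u} : IAcc C a basic v (fn f us) → u ∈ us → basic u →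
      IAcc C a basic v u
  | appL {u x} : IAcc C a basic v (appT a u (var x)) → x ∉ fv u → x ∉ fv v →
      IAcc C a basic v u
  | appR {x us u} : IAcc C a basic v (appSpine a (var x) us) →
      (∀ w ∈ us, x ∉ fv w) → x ∉ fv v → u ∈ us → IAcc C a basic v u

end Tm


namespace Tm

lemma vapp_fn (σ : Val) (f : ℕ) (us : List Tm) :
    vapp σ (fn f us) = fn f (us.attach.map fun ⟨u, hu⟩ => vapp σ u) := by
  rw [vapp]

lemma vapp_mem {σ : Val} {t : Tm} {us : List Tm} (h : t ∈ us) :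
    vapp σ t ∈ us.attach.map fun ⟨u, hu⟩ => vapp σ u := by
  simp only [List.mem_map, List.mem_attach]
  exact ⟨⟨t, h⟩, trivial, rfl⟩

lemma fnReach_vapp {σ : Val} {t s : Tm} (h : FnReach t s) :
    FnReach (vapp σ t) (vapp σ s) := by
  induction h with
  | refl => exact FnReach.refl _
  | step hmem _ ih =>
      rw [vapp_fn]
      exact FnReach.step (vapp_mem hmem) ih

lemma sizeOf_lt_of_mem_fn {m : Tm} {f : ℕ} {l : List Tm} (h : m ∈ l) :
    sizeOf m < sizeOf (fn f l) := by
  have := List.sizeOf_lt_of_mem h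
  simp only [Tm.fn.sizeOf_spec]
  omega

lemma fnReach_sizeOf_le {σ : Val} {t s : Tm} (h : FnReach t s) :
    sizeOf (vapp σ s) ≤ sizeOf (vapp σ t) := by
  induction h with
  | refl => exact le_refl _
  | step hmem _ ih =>
      rw [vapp_fn]
      exact ih.trans (sizeOf_lt_of_mem_fn (vapp_mem hmem)).le

lemma fnReach_sizeOf_lt {σ : Val} {t s : Tm} (h : FnReach t s) (hne : t ≠ s) :
    sizeOf (vapp σ s) < sizeOf (vapp σ t) := by
  cases h with
  | refl => exact absurd rfl hne
  | step hmem h' =>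
      rw [vapp_fn]
      exact lt_of_le_of_lt (fnReach_sizeOf_le h') (sizeOf_lt_of_mem_fn (vapp_mem hmem))

lemma covered_vapp {σ : Val} {u v : Tm} (h : Covered u v) :
    Covered (vapp σ u) (vapp σ v) := by
  induction h with
  | base h => exact Covered.base (fnReach_vapp h)
  | abs _ ih => rw [vapp, vapp]; exact Covered.abs ih

lemma covered_vapp_ne {σ : Val} {u v : Tm} (h : Covered u v) (hne : u ≠ v) :
    vapp σ u ≠ vapp σ v := by
  induction h with
  | base h =>
      intro heq
      exact absurd (congrArg sizeOf heq.symm) (ne_of_lt (fnReach_sizeOf_lt h hne))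
  | abs h ih =>
      rw [vapp, vapp]
      intro heq
      injection heq with _ heq
      exact ih (fun h' => hne (by rw [h'])) heq

end Tm

open Tm in
/-- the covered-subterm ordering is stable by valuation:
if `v` is a strict covered-subterm of `u` and `σ` is an IDTS-valuation,
then `vσ` is a strict covered-subterm of `uσ`. -/
theorem strictCovered_stable_vapp :
    ∀ (u v : Tm) (σ : Val), StrictCovered u v →
      StrictCovered (vapp σ u) (vapp σ v) := by
  rintro u v σ ⟨hc, hne⟩
  exact ⟨covered_vapp hc, covered_vapp_ne hc hne⟩
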